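/- Let J be an admissible kernel (nonnegative, even, integrable, non-increasing on (0,∞), with ∫ z²J(z) dz < ∞) and let H(s) = ∫_s^∞ z J(z) dz. Then for every φ ∈ H¹((0,∞)) and every λ > 0, λ² ∫₀^∞ (φ(x) - φ(0))² J(λ x) dx ≤ ∫₀^∞ φ'(x)² H(λ x) dx. Moreover H is non-increasing, bounded, and H(s) → 0 as s → ∞. -/

import Mathlib

open MeasureTheory Set Filter

private lemma stmt12_zJ_int (J : ℝ → ℝ) (hJnn : ∀ z, 0 ≤ J z) (hJint : Integrable J)
    (hJ2 : Integrable (fun z => z ^ 2 * J z)) : Integrable (fun z => z * J z) := by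
  refine (hJint.add hJ2).mono (aestronglyMeasurable_id.mul hJint.1) (ae_of_all _ fun z => ?_)
  have h1 := hJnn z
  have h2 : ‖z * J z‖ = |z| * J z := by
    rw [norm_mul, Real.norm_eq_abs, Real.norm_eq_abs, abs_of_nonneg h1]
  have h3 : ‖J z + z ^ 2 * J z‖ = J z + z ^ 2 * J z := by
    rw [Real.norm_eq_abs, abs_of_nonneg]; positivity
  rw [h2]; simp only [Pi.add_apply] at *
  nlinarith [sq_abs z, abs_nonneg z, sq_nonneg (|z| - 1)]

private lemma stmt12_g2_int (φ : ℝ → ℝ) (hφ'2 : MemLp (deriv φ) 2 (volume.restrict (Ioi 0)))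
    (x : ℝ) :
    IntegrableOn (deriv φ) (Ioc 0 x) ∧ IntegrableOn (fun s => deriv φ s ^ 2) (Ioc 0 x) := by
  have hres : (volume.restrict (Ioi (0:ℝ))).restrict (Ioc 0 x) = volume.restrict (Ioc 0 x) := by
    rw [Measure.restrict_restrict measurableSet_Ioc,
      inter_eq_self_of_subset_left Ioc_subset_Ioi_self]
  have hmem : MemLp (deriv φ) 2 (volume.restrict (Ioc 0 x)) := by
    rw [← hres]; exact hφ'2.restrict _
  haveI : IsFiniteMeasure (volume.restrict (Ioc (0:ℝ) x)) :=
    ⟨by rw [Measure.restrict_apply_univ]; exact measure_Ioc_lt_top⟩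
  exact ⟨hmem.integrable one_le_two, hmem.integrable_sq⟩

private lemma stmt12_key (φ : ℝ → ℝ) (hφc : ContinuousOn φ (Ici 0))
    (hφd : ∀ x ∈ Ioi (0:ℝ), HasDerivAt φ (deriv φ x) x)
    (hφ'2 : MemLp (deriv φ) 2 (volume.restrict (Ioi 0)))
    (x : ℝ) (hx : 0 < x) :
    (φ x - φ 0) ^ 2 ≤ x * ∫ s in Ioc 0 x, (deriv φ s) ^ 2 := by
  set g := deriv φ with hg
  obtain ⟨hgint, hg2int⟩ := stmt12_g2_int φ hφ'2 x
  have hftc : ∫ t in (0:ℝ)..x, g t = φ x - φ 0 := by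
    refine intervalIntegral.integral_eq_sub_of_hasDeriv_right_of_le hx.le
      (hφc.mono Icc_subset_Ici_self) (fun t ht => (hφd t ht.1).hasDerivWithinAt) ?_
    exact (intervalIntegrable_iff_integrableOn_Ioc_of_le hx.le).2 hgint
  rw [intervalIntegral.integral_of_le hx.le] at hftc
  set I := ∫ t in Ioc 0 x, g t with hI
  set Q := ∫ t in Ioc 0 x, g t ^ 2 with hQ
  rw [← hftc]
  have h0 : 0 ≤ ∫ t in Ioc 0 x, (g t - I / x) ^ 2 :=
    setIntegral_nonneg measurableSet_Ioc fun t _ => sq_nonneg _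
  have hexp : ∫ t in Ioc 0 x, (g t - I / x) ^ 2
      = Q - 2 * (I / x) * I + (I / x) ^ 2 * x := by
    have hrw : (fun t => (g t - I / x) ^ 2)
        = fun t => (g t ^ 2 - 2 * (I / x) * g t) + (I / x) ^ 2 := by
      funext t; ring
    have ha : IntegrableOn (fun t => g t ^ 2 - 2 * (I / x) * g t) (Ioc 0 x) :=
      hg2int.sub (hgint.const_mul _)
    have hb : IntegrableOn (fun t => 2 * (I / x) * g t) (Ioc 0 x) := hgint.const_mul _
    rw [hrw, integral_add ha (integrable_const _),
      integral_sub hg2int hb, MeasureTheory.integral_const_mul, integral_const,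
      measureReal_restrict_apply_univ, measureReal_def, Real.volume_Ioc, sub_zero, ENNReal.toReal_ofReal hx.le]
    simp only [smul_eq_mul]
    ring
  rw [hexp] at h0
  have h1 : (I / x) ^ 2 * x = I ^ 2 / x := by field_simp
  have h2 : 2 * (I / x) * I = 2 * I ^ 2 / x := by field_simp
  rw [h1, h2] at h0
  have := mul_le_mul_of_nonneg_left h0 hx.le
  field_simp at this ⊢
  nlinarith

private lemma stmt12_tonelli (g J : ℝ → ℝ) (hgm : Measurable g) (hJint : Integrable J)
    (lam : ℝ) (hlam : 0 < lam) :
    ∫⁻ x in Ioi (0:ℝ),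
        (∫⁻ s in Ioc 0 x, ENNReal.ofReal (g s ^ 2)) * ENNReal.ofReal (x * J (lam * x))
      = ∫⁻ s in Ioi (0:ℝ),
          ENNReal.ofReal (g s ^ 2) * ∫⁻ x in Ici s, ENNReal.ofReal (x * J (lam * x)) := by
  set w0 : ℝ → ℝ := fun x => x * J (lam * x) with hw0def
  have hqmp : Measure.QuasiMeasurePreserving (fun x : ℝ => lam * x) volume volume := by
    refine ⟨measurable_const_mul lam, ?_⟩
    rw [Real.map_volume_mul_left hlam.ne']
    exact Measure.smul_absolutelyContinuous
  have hw0 : AEMeasurable w0 volume :=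
    aemeasurable_id.mul (hJint.aemeasurable.comp_quasiMeasurePreserving hqmp)
  set S : Set (ℝ × ℝ) := {p | 0 < p.2 ∧ p.2 ≤ p.1} with hSdef
  have hS : MeasurableSet S :=
    (measurableSet_lt measurable_const measurable_snd).inter
      (measurableSet_le measurable_snd measurable_fst)
  set Ψ : ℝ × ℝ → ENNReal :=
    fun p => S.indicator (fun p => ENNReal.ofReal (g p.2 ^ 2) * ENNReal.ofReal (w0 p.1)) p
    with hΨdef
  have hΨ : AEMeasurable Ψ (volume.prod volume) := by
    refine AEMeasurable.indicator ?_ hS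
    exact ((ENNReal.measurable_ofReal.comp ((hgm.pow_const 2).comp measurable_snd)).aemeasurable).mul
      (ENNReal.measurable_ofReal.comp_aemeasurable
        (hw0.comp_quasiMeasurePreserving Measure.quasiMeasurePreserving_fst))
  have hL : ∀ x : ℝ, (Ioi (0:ℝ)).indicator
      (fun x => (∫⁻ s in Ioc 0 x, ENNReal.ofReal (g s ^ 2)) * ENNReal.ofReal (w0 x)) x
      = ∫⁻ s, Ψ (x, s) := by
    intro x
    by_cases hx : x ∈ Ioi (0:ℝ)
    · rw [indicator_of_mem hx]
      have h1 : ∀ s, Ψ (x, s)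
          = (Ioc 0 x).indicator (fun s => ENNReal.ofReal (g s ^ 2) * ENNReal.ofReal (w0 x)) s := by
        intro s
        by_cases hs : s ∈ Ioc 0 x
        · rw [indicator_of_mem hs]
          exact indicator_of_mem (show (x, s) ∈ S from ⟨hs.1, hs.2⟩) _
        · rw [indicator_of_notMem hs]
          exact indicator_of_notMem (fun hmem : (x,s) ∈ S => hs ⟨hmem.1, hmem.2⟩) _
      simp_rw [h1]
      rw [lintegral_indicator measurableSet_Ioc,
        lintegral_mul_const' _ _ ENNReal.ofReal_ne_top]
    · rw [indicator_of_notMem hx]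
      symm
      have h1 : ∀ s, Ψ (x, s) = 0 := by
        intro s
        refine indicator_of_notMem (fun hmem : (x,s) ∈ S => hx ?_) _
        exact lt_of_lt_of_le hmem.1 hmem.2
      simp_rw [h1, lintegral_zero]
  have hR : ∀ s : ℝ, (∫⁻ x, Ψ (x, s)) = (Ioi (0:ℝ)).indicator
      (fun s => ENNReal.ofReal (g s ^ 2) * ∫⁻ x in Ici s, ENNReal.ofReal (w0 x)) s := by
    intro s
    by_cases hs : s ∈ Ioi (0:ℝ)
    · rw [indicator_of_mem hs]
      have h1 : ∀ x, Ψ (x, s)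
          = (Ici s).indicator (fun x => ENNReal.ofReal (g s ^ 2) * ENNReal.ofReal (w0 x)) x := by
        intro x
        by_cases hxs : x ∈ Ici s
        · rw [indicator_of_mem hxs]
          exact indicator_of_mem (show (x, s) ∈ S from ⟨hs, hxs⟩) _
        · rw [indicator_of_notMem hxs]
          exact indicator_of_notMem (fun hmem : (x,s) ∈ S => hxs hmem.2) _
      simp_rw [h1]
      rw [lintegral_indicator measurableSet_Ici,
        lintegral_const_mul' _ _ ENNReal.ofReal_ne_top]
    · rw [indicator_of_notMem hs]
      have h1 : ∀ x, Ψ (x, s) = 0 := fun x =>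
        indicator_of_notMem (fun hmem : (x,s) ∈ S => hs hmem.1) _
      simp_rw [h1, lintegral_zero]
  calc ∫⁻ x in Ioi (0:ℝ), (∫⁻ s in Ioc 0 x, ENNReal.ofReal (g s ^ 2)) * ENNReal.ofReal (w0 x)
      = ∫⁻ x, (Ioi (0:ℝ)).indicator
        (fun x => (∫⁻ s in Ioc 0 x, ENNReal.ofReal (g s ^ 2)) * ENNReal.ofReal (w0 x)) x :=
        (lintegral_indicator measurableSet_Ioi _).symm
    _ = ∫⁻ x, ∫⁻ s, Ψ (x, s) := by simp_rw [hL]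
    _ = ∫⁻ s, ∫⁻ x, Ψ (x, s) := lintegral_lintegral_swap hΨ
    _ = ∫⁻ s, (Ioi (0:ℝ)).indicator
        (fun s => ENNReal.ofReal (g s ^ 2) * ∫⁻ x in Ici s, ENNReal.ofReal (w0 x)) s := by
        simp_rw [hR]
    _ = ∫⁻ s in Ioi (0:ℝ), ENNReal.ofReal (g s ^ 2) * ∫⁻ x in Ici s, ENNReal.ofReal (w0 x) :=
        lintegral_indicator measurableSet_Ioi _

private lemma stmt12_inner (J : ℝ → ℝ) (hJnn : ∀ z, 0 ≤ J z)
    (hzJ : Integrable (fun z => z * J z))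
    (H : ℝ → ℝ) (hH : ∀ s, H s = ∫ z in Ioi s, z * J z)
    (lam : ℝ) (hlam : 0 < lam) (s : ℝ) (hs : 0 < s) :
    ∫⁻ x in Ici s, ENNReal.ofReal (x * J (lam * x))
      = ENNReal.ofReal (lam⁻¹ * (lam⁻¹ * H (lam * s))) := by
  set u : ℝ → ℝ := fun z => z * J z with hu
  have hcomp : Integrable (fun x => u (lam * x)) := hzJ.comp_mul_left' hlam.ne'
  have hw0eq : (fun x => x * J (lam * x)) = fun x => lam⁻¹ * u (lam * x) := by
    funext x
    simp only [hu]
    field_simp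
  have hw0i : IntegrableOn (fun x => x * J (lam * x)) (Ioi s) := by
    rw [hw0eq]; exact (hcomp.const_mul _).integrableOn
  have hval : ∫ x in Ioi s, x * J (lam * x) = lam⁻¹ * (lam⁻¹ * H (lam * s)) := by
    rw [hw0eq, MeasureTheory.integral_const_mul, integral_comp_mul_left_Ioi u s hlam,
      hH (lam * s), smul_eq_mul]
  rw [setLIntegral_congr (Ioi_ae_eq_Ici (a := s)).symm, ← hval]
  rw [← ofReal_integral_eq_lintegral_ofReal hw0i ?_]
  filter_upwards [ae_restrict_mem measurableSet_Ioi] with x hx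
  exact mul_nonneg (hs.trans hx).le (hJnn _)

/-- control of the interaction of the infinite edges with the vertex. -/
theorem stmt12 (J : ℝ → ℝ) (hJnn : ∀ z, 0 ≤ J z) (hJsymm : ∀ z, J (-z) = J z)
    (hJint : Integrable J)
    (hJmono : ∀ ⦃z w : ℝ⦄, 0 < z → z ≤ w → J w ≤ J z)
    (hJ2 : Integrable (fun z => z ^ 2 * J z))
    (H : ℝ → ℝ) (hH : ∀ s, H s = ∫ z in Ioi s, z * J z)
    (φ : ℝ → ℝ) (hφc : ContinuousOn φ (Ici 0))
    (hφd : ∀ x ∈ Ioi (0:ℝ), HasDerivAt φ (deriv φ x) x)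
    (hφ2 : MemLp φ 2 (volume.restrict (Ioi 0)))
    (hφ'2 : MemLp (deriv φ) 2 (volume.restrict (Ioi 0)))
    (lam : ℝ) (hlam : 0 < lam) :
    (lam ^ 2 * ∫ x in Ioi (0:ℝ), (φ x - φ 0) ^ 2 * J (lam * x) ≤
        ∫ x in Ioi (0:ℝ), (deriv φ x) ^ 2 * H (lam * x)) ∧
    AntitoneOn H (Ici 0) ∧ (∃ C, ∀ s ≥ (0:ℝ), |H s| ≤ C) ∧
    Tendsto H atTop (nhds 0) := by
  have hzJ : Integrable (fun z => z * J z) := stmt12_zJ_int J hJnn hJint hJ2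
  set u : ℝ → ℝ := fun z => z * J z with hu
  have hIoi : ∀ s : ℝ, IntegrableOn u (Ioi s) := fun s => hzJ.integrableOn
  -- antitone
  have hanti : AntitoneOn H (Ici 0) := by
    intro s hs t ht hst
    rw [hH s, hH t]
    refine setIntegral_mono_set (hIoi s) ?_ (ae_of_all _ fun z hz => hz.trans_le' hst)
    filter_upwards [ae_restrict_mem measurableSet_Ioi] with z hz
    exact mul_nonneg (le_of_lt (lt_of_le_of_lt hs hz)) (hJnn z)
  -- bound
  have hBnd : ∀ s : ℝ, |H s| ≤ ∫ z, |u z| := by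
    intro s
    rw [hH s]
    calc |∫ z in Ioi s, u z| ≤ ∫ z in Ioi s, |u z| := by
          simpa using norm_integral_le_integral_norm (μ := volume.restrict (Ioi s)) u
      _ ≤ ∫ z, |u z| := setIntegral_le_integral hzJ.abs (ae_of_all _ fun z => abs_nonneg _)
  -- representation, continuity, limit
  have hrepr : ∀ s : ℝ, H s = (∫ z in Ioi (0:ℝ), u z) - ∫ z in (0:ℝ)..s, u z := by
    intro s
    have h1 : (∫ z in Iic s, u z) + ∫ z in Ioi s, u z = ∫ z, u z := by
      rw [show Ioi s = (Iic s)ᶜ from compl_Iic.symm]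
      exact integral_add_compl measurableSet_Iic hzJ
    have h2 : (∫ z in Iic (0:ℝ), u z) + ∫ z in Ioi (0:ℝ), u z = ∫ z, u z := by
      rw [show Ioi (0:ℝ) = (Iic (0:ℝ))ᶜ from compl_Iic.symm]
      exact integral_add_compl measurableSet_Iic hzJ
    have h3 : (∫ z in Iic s, u z) - ∫ z in Iic (0:ℝ), u z = ∫ z in (0:ℝ)..s, u z :=
      intervalIntegral.integral_Iic_sub_Iic hzJ.integrableOn hzJ.integrableOn
    rw [hH s]; linarith
  have htend : Tendsto H atTop (nhds 0) := by
    have hlim : Tendsto (fun s => ∫ z in (0:ℝ)..s, u z) atTop (nhds (∫ z in Ioi (0:ℝ), u z)) :=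
      intervalIntegral_tendsto_integral_Ioi 0 (hIoi 0) tendsto_id
    have h4 : Tendsto (fun s => (∫ z in Ioi (0:ℝ), u z) - ∫ z in (0:ℝ)..s, u z) atTop
        (nhds ((∫ z in Ioi (0:ℝ), u z) - ∫ z in Ioi (0:ℝ), u z)) := tendsto_const_nhds.sub hlim
    rw [sub_self] at h4
    exact h4.congr fun s => (hrepr s).symm
  have hHc : Continuous H := by
    have h5 : Continuous fun s => (∫ z in Ioi (0:ℝ), u z) - ∫ z in (0:ℝ)..s, u z :=
      continuous_const.sub
        (intervalIntegral.continuous_primitive (fun a b => hzJ.intervalIntegrable) 0)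
    exact h5.congr fun s => (hrepr s).symm
  refine ⟨?_, hanti, ⟨∫ z, |u z|, fun s _ => hBnd s⟩, htend⟩
  -- the main inequality
  set g := deriv φ with hg
  have hgm : Measurable g := measurable_deriv φ
  have hHnn : ∀ s : ℝ, 0 ≤ s → 0 ≤ H s := by
    intro s hs
    rw [hH s]
    exact setIntegral_nonneg measurableSet_Ioi fun z hz => mul_nonneg (hs.trans hz.le) (hJnn z)
  have hGint : Integrable (fun s => g s ^ 2) (volume.restrict (Ioi 0)) := hφ'2.integrable_sq
  set B := ∫ z, |u z| with hB
  have hBnn : 0 ≤ B := integral_nonneg fun z => abs_nonneg _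
  have hRint : Integrable (fun s => g s ^ 2 * H (lam * s)) (volume.restrict (Ioi 0)) := by
    refine (hGint.const_mul B).mono
      (((hgm.pow_const 2).mul
        ((hHc.comp (continuous_const.mul continuous_id)).measurable)).aestronglyMeasurable)
      (ae_of_all _ fun s => ?_)
    have h6 : ‖g s ^ 2 * H (lam * s)‖ = g s ^ 2 * |H (lam * s)| := by
      rw [norm_mul, Real.norm_eq_abs, Real.norm_eq_abs, abs_of_nonneg (sq_nonneg _)]
    have h7 : ‖B * g s ^ 2‖ = B * g s ^ 2 := by
      rw [Real.norm_eq_abs, abs_of_nonneg (by positivity)]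
    rw [h6, h7]
    calc g s ^ 2 * |H (lam * s)| ≤ g s ^ 2 * B :=
          mul_le_mul_of_nonneg_left (hBnd _) (sq_nonneg _)
      _ = B * g s ^ 2 := mul_comm _ _
  have hRnn : 0 ≤ ∫ s in Ioi (0:ℝ), g s ^ 2 * H (lam * s) :=
    setIntegral_nonneg measurableSet_Ioi fun s hs =>
      mul_nonneg (sq_nonneg _) (hHnn _ (mul_nonneg hlam.le (le_of_lt hs)))
  by_cases hf1 : IntegrableOn (fun x => (φ x - φ 0) ^ 2 * J (lam * x)) (Ioi 0) volume
  · -- main chain via lintegrals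
    set L := ∫ x in Ioi (0:ℝ), (φ x - φ 0) ^ 2 * J (lam * x) with hL
    set R := ∫ s in Ioi (0:ℝ), g s ^ 2 * H (lam * s) with hR
    have e1 : ENNReal.ofReal L
        = ∫⁻ x in Ioi (0:ℝ), ENNReal.ofReal ((φ x - φ 0) ^ 2 * J (lam * x)) :=
      ofReal_integral_eq_lintegral_ofReal hf1
        (ae_of_all _ fun x => mul_nonneg (sq_nonneg _) (hJnn _))
    have e2 : (∫⁻ x in Ioi (0:ℝ), ENNReal.ofReal ((φ x - φ 0) ^ 2 * J (lam * x)))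
        ≤ ∫⁻ x in Ioi (0:ℝ),
            (∫⁻ s in Ioc 0 x, ENNReal.ofReal (g s ^ 2)) * ENNReal.ofReal (x * J (lam * x)) := by
      refine lintegral_mono_ae ?_
      filter_upwards [ae_restrict_mem measurableSet_Ioi] with x hx
      have hk := stmt12_key φ hφc hφd hφ'2 x hx
      have hQnn : 0 ≤ ∫ s in Ioc 0 x, g s ^ 2 :=
        setIntegral_nonneg measurableSet_Ioc fun s _ => sq_nonneg _
      calc ENNReal.ofReal ((φ x - φ 0) ^ 2 * J (lam * x))
          ≤ ENNReal.ofReal ((x * ∫ s in Ioc 0 x, g s ^ 2) * J (lam * x)) :=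
            ENNReal.ofReal_le_ofReal (mul_le_mul_of_nonneg_right hk (hJnn _))
        _ = ENNReal.ofReal (∫ s in Ioc 0 x, g s ^ 2) * ENNReal.ofReal (x * J (lam * x)) := by
            rw [show (x * ∫ s in Ioc 0 x, g s ^ 2) * J (lam * x)
              = (∫ s in Ioc 0 x, g s ^ 2) * (x * J (lam * x)) by ring,
              ENNReal.ofReal_mul hQnn]
        _ = (∫⁻ s in Ioc 0 x, ENNReal.ofReal (g s ^ 2)) * ENNReal.ofReal (x * J (lam * x)) := by
            rw [ofReal_integral_eq_lintegral_ofReal (stmt12_g2_int φ hφ'2 x).2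
              (ae_of_all _ fun s => sq_nonneg _)]
    have e3 := stmt12_tonelli g J hgm hJint lam hlam
    have e4 : (∫⁻ s in Ioi (0:ℝ),
          ENNReal.ofReal (g s ^ 2) * ∫⁻ x in Ici s, ENNReal.ofReal (x * J (lam * x)))
        = ENNReal.ofReal (lam⁻¹ * lam⁻¹) * ∫⁻ s in Ioi (0:ℝ),
            ENNReal.ofReal (g s ^ 2 * H (lam * s)) := by
      rw [← lintegral_const_mul' _ _ ENNReal.ofReal_ne_top]
      refine setLIntegral_congr_fun measurableSet_Ioi (fun s hs => ?_)
      rw [stmt12_inner J hJnn hzJ H hH lam hlam s hs]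
      have hs' : (0:ℝ) ≤ H (lam * s) := hHnn _ (mul_nonneg hlam.le (le_of_lt hs))
      rw [show lam⁻¹ * (lam⁻¹ * H (lam * s)) = (lam⁻¹ * lam⁻¹) * H (lam * s) by ring,
        ENNReal.ofReal_mul (by positivity), ENNReal.ofReal_mul (sq_nonneg (g s))]
      ring
    have e5 : (∫⁻ s in Ioi (0:ℝ), ENNReal.ofReal (g s ^ 2 * H (lam * s)))
        = ENNReal.ofReal R := by
      rw [hR]
      refine (ofReal_integral_eq_lintegral_ofReal hRint ?_).symm
      filter_upwards [ae_restrict_mem measurableSet_Ioi] with s hs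
      exact mul_nonneg (sq_nonneg _) (hHnn _ (mul_nonneg hlam.le (le_of_lt hs)))
    have final : ENNReal.ofReal (lam ^ 2 * L) ≤ ENNReal.ofReal R := by
      have hLnn : 0 ≤ L :=
        setIntegral_nonneg measurableSet_Ioi fun x _ => mul_nonneg (sq_nonneg _) (hJnn _)
      calc ENNReal.ofReal (lam ^ 2 * L)
          = ENNReal.ofReal (lam ^ 2) * ENNReal.ofReal L := ENNReal.ofReal_mul (by positivity)
        _ ≤ ENNReal.ofReal (lam ^ 2) * (ENNReal.ofReal (lam⁻¹ * lam⁻¹) * ENNReal.ofReal R) := by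
            rw [e1]
            refine mul_le_mul_right ?_ _
            calc (∫⁻ x in Ioi (0:ℝ), ENNReal.ofReal ((φ x - φ 0) ^ 2 * J (lam * x)))
                ≤ _ := e2
              _ = _ := e3
              _ = _ := e4
              _ = ENNReal.ofReal (lam⁻¹ * lam⁻¹) * ENNReal.ofReal R := by rw [e5]
        _ = ENNReal.ofReal (lam ^ 2 * (lam⁻¹ * lam⁻¹)) * ENNReal.ofReal R := by
            rw [← mul_assoc, ← ENNReal.ofReal_mul (by positivity)]
        _ = ENNReal.ofReal R := by
            rw [show lam ^ 2 * (lam⁻¹ * lam⁻¹) = 1 by field_simp, ENNReal.ofReal_one,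
              one_mul]
    exact (ENNReal.ofReal_le_ofReal_iff hRnn).1 final
  · rw [MeasureTheory.integral_undef hf1, mul_zero]
    exact hRnn
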